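/- Let H be a separable Hilbert space, f, g : ℝ → [0,1] Lipschitz functions with f² + g² ≡ 1, and A a nonnegative bounded self-adjoint operator on a direct sum ⊕_{j≥0} H_j (with H_j closed mutually orthogonal subspaces) such that P_i A P_j = 0 whenever |i − j| > σ, where P_j is the orthogonal projection onto H_j. Define f_M = Σ_j f(j/M) P_j and g_M = Σ_j g(j/M) P_j. Then for every unit vector Φ, |⟨Φ, AΦ⟩ − ⟨f_M Φ, A f_M Φ⟩ − ⟨g_M Φ, A g_M Φ⟩| ≤ 2σ · (‖f‖_Lip² + ‖g‖_Lip²) · (σ/M)² · ⟨Φ, A₀ Φ⟩, where A₀ = Σ_j P_j A P_j is the diagonal part of A. -/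

import Mathlib

open scoped ComplexOrder

set_option linter.unusedSectionVars false

lemma aux_cs {H : Type*} [NormedAddCommGroup H] [InnerProductSpace ℂ H] [CompleteSpace H]
    (A : H →L[ℂ] H) (hAsa : IsSelfAdjoint A)
    (hApos : ∀ x : H, 0 ≤ (inner ℂ x (A x) : ℂ).re) (x y : H) :
    ‖(inner ℂ x (A y) : ℂ)‖ ≤ ((inner ℂ x (A x) : ℂ).re + ((inner ℂ y (A y) : ℂ)).re) / 2 := by
  have hsym := hAsa.isSymmetric
  set z : ℂ := inner ℂ x (A y) with hz
  rcases eq_or_ne z 0 with h0 | h0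
  · rw [h0]
    simp only [norm_zero]
    have := hApos x; have := hApos y; linarith
  · have habsz : (0:ℝ) < ‖z‖ := by
      simpa using h0
    have habsz' : ((‖z‖ : ℝ) : ℂ) ≠ 0 := by
      exact_mod_cast ne_of_gt habsz
    set c : ℂ := (starRingEnd ℂ) z / ((‖z‖ : ℝ) : ℂ) with hc
    have hcz : c * z = ((‖z‖ : ℝ) : ℂ) := by
      rw [hc, div_mul_eq_mul_div, Complex.conj_mul']
      field_simp
    have hcc : (starRingEnd ℂ) c * c = 1 := by
      rw [hc, map_div₀, Complex.conj_conj, Complex.conj_ofReal]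
      field_simp [Complex.mul_conj']
      exact Complex.mul_conj' z
    have key := hApos (x - c • y)
    have hexp : (inner ℂ (x - c • y) (A (x - c • y)) : ℂ)
        = inner ℂ x (A x) - ((‖z‖ : ℝ) : ℂ) - (starRingEnd ℂ) c * inner ℂ y (A x)
          + (starRingEnd ℂ) c * c * inner ℂ y (A y) := by
      rw [map_sub, map_smul, inner_sub_left, inner_sub_right, inner_sub_right,
        inner_smul_right, inner_smul_left, inner_smul_left, inner_smul_right]
      rw [← hz, hcz]
      ring
    have hyx : (inner ℂ y (A x) : ℂ) = (starRingEnd ℂ) z := by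
      have hsym' := hsym y x
      simp only [ContinuousLinearMap.coe_coe] at hsym'
      rw [hz, ← hsym']
      exact (inner_conj_symm _ _).symm
    rw [hexp, hyx] at key
    have hcz2 : (starRingEnd ℂ) c * (starRingEnd ℂ) z = ((‖z‖ : ℝ) : ℂ) := by
      rw [← map_mul, hcz, Complex.conj_ofReal]
    rw [hcz2, hcc, one_mul] at key
    simp only [Complex.sub_re, Complex.add_re, Complex.ofReal_re] at key
    linarith


section Main
variable {H : Type*} [NormedAddCommGroup H] [InnerProductSpace ℂ H] [CompleteSpace H]

-- generic sum claim
lemma aux_claim (P : ℕ → H →L[ℂ] H) (A : H →L[ℂ] H) (σ : ℕ) (Φ : H)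
    (hq0' : ∀ i j : ℕ, i ∉ Finset.Icc (j - σ) (j + σ) →
      (inner ℂ (P i Φ) (A (P j Φ)) : ℂ) = 0)
    (w : ℕ → ℝ) (W : H) (hW : HasSum (fun j => w j • P j Φ) W) :
    HasSum (fun j => ∑ i ∈ Finset.Icc (j - σ) (j + σ),
        ((w i : ℂ) * (w j : ℂ)) * (inner ℂ (P i Φ) (A (P j Φ)) : ℂ))
      (inner ℂ W (A W)) := by
  have hterm : ∀ i j : ℕ, (inner ℂ (w i • P i Φ) (A (w j • P j Φ)) : ℂ)
      = ((w i : ℂ) * (w j : ℂ)) * (inner ℂ (P i Φ) (A (P j Φ)) : ℂ) := by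
    intro i j
    rw [← Complex.coe_smul, ← Complex.coe_smul, map_smul, inner_smul_left,
      inner_smul_right, Complex.conj_ofReal]
    ring
  have step1 : HasSum (fun j => A (w j • P j Φ)) (A W) := hW.mapL A
  have step2 : HasSum (fun j => (inner ℂ W (A (w j • P j Φ)) : ℂ)) (inner ℂ W (A W)) :=
    step1.mapL (innerSL ℂ W)
  have step3 : ∀ j : ℕ, (inner ℂ W (A (w j • P j Φ)) : ℂ)
      = ∑ i ∈ Finset.Icc (j - σ) (j + σ),
        ((w i : ℂ) * (w j : ℂ)) * (inner ℂ (P i Φ) (A (P j Φ)) : ℂ) := by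
    intro j
    have h4 : HasSum (fun i => (inner ℂ (w i • P i Φ) (A (w j • P j Φ)) : ℂ))
        (inner ℂ W (A (w j • P j Φ))) := by
      have := (hW.mapL (innerSL ℂ (A (w j • P j Φ)))).star
      simp only [innerSL_apply_apply, inner_conj_symm, RingHom.id_apply, starRingEnd_apply] at this ⊢
      convert this using 2 with i
      · rfl
      · exact (inner_conj_symm (𝕜 := ℂ) (E := H) _ _).symm
      · exact (inner_conj_symm (𝕜 := ℂ) (E := H) _ _).symm
    have h5 : ∀ i ∉ Finset.Icc (j - σ) (j + σ),
        (inner ℂ (w i • P i Φ) (A (w j • P j Φ)) : ℂ) = 0 := by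
      intro i hi
      rw [hterm, hq0' i j hi, mul_zero]
    have h6 := hasSum_sum_of_ne_finset_zero (L := SummationFilter.unconditional ℕ) h5
    have := h4.unique h6
    rw [this]
    exact Finset.sum_congr rfl fun i _ => hterm i j
  exact HasSum.congr_fun step2 fun j => (step3 j).symm
end Main


set_option maxHeartbeats 1000000 in

/-- IMS localization formula for band operators on a graded Hilbert space
`H = ⊕_{j≥0} H_j` (the `H_j` being the ranges of orthogonal projections `P j` summing
to the identity).  If `A ≥ 0` is a band operator of width `σ` and `f, g : ℝ → [0,1]`
are Lipschitz with `f² + g² ≡ 1`, then with `f_M = Σ_j f(j/M) P_j`,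
`g_M = Σ_j g(j/M) P_j` and diagonal part `A₀ = Σ_j P_j A P_j`, for every unit vector `Φ`:
`|⟨Φ,AΦ⟩ - ⟨f_M Φ, A f_M Φ⟩ - ⟨g_M Φ, A g_M Φ⟩| ≤ 2σ (‖f‖_Lip² + ‖g‖_Lip²) (σ/M)² ⟨Φ, A₀Φ⟩`. -/
theorem stmt9 {H : Type*} [NormedAddCommGroup H] [InnerProductSpace ℂ H] [CompleteSpace H]
    (P : ℕ → H →L[ℂ] H)
    (hPproj : ∀ j, (P j).comp (P j) = P j) (hPsa : ∀ j, IsSelfAdjoint (P j))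
    (hPorth : ∀ i j, i ≠ j → (P i).comp (P j) = 0)
    (hPcomplete : ∀ x : H, HasSum (fun j => P j x) x)
    (A : H →L[ℂ] H) (hAsa : IsSelfAdjoint A)
    (hApos : ∀ x : H, 0 ≤ (inner ℂ x (A x) : ℂ).re)
    (σ : ℕ) (hband : ∀ i j : ℕ, σ < ((i : ℤ) - (j : ℤ)).natAbs →
      (P i).comp (A.comp (P j)) = 0)
    (f g : ℝ → ℝ) (hf01 : ∀ t, f t ∈ Set.Icc (0:ℝ) 1) (hg01 : ∀ t, g t ∈ Set.Icc (0:ℝ) 1)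
    (Lf Lg : NNReal) (hLf : LipschitzWith Lf f) (hLg : LipschitzWith Lg g)
    (hfg : ∀ t, f t ^ 2 + g t ^ 2 = 1)
    (M : ℝ) (hM : 0 < M)
    (fM gM A0 : H →L[ℂ] H)
    (hfM : ∀ x : H, HasSum (fun j : ℕ => f (j / M) • P j x) (fM x))
    (hgM : ∀ x : H, HasSum (fun j : ℕ => g (j / M) • P j x) (gM x))
    (hA0 : ∀ x : H, HasSum (fun j : ℕ => P j (A (P j x))) (A0 x))
    (Φ : H) (hΦ : ‖Φ‖ = 1) :
    |(inner ℂ Φ (A Φ) : ℂ).re - (inner ℂ (fM Φ) (A (fM Φ)) : ℂ).re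
        - (inner ℂ (gM Φ) (A (gM Φ)) : ℂ).re|
      ≤ 2 * σ * ((Lf : ℝ)^2 + (Lg : ℝ)^2) * ((σ : ℝ) / M)^2 * (inner ℂ Φ (A0 Φ) : ℂ).re := by
  classical
  set q : ℕ → ℕ → ℂ := fun i j => inner ℂ (P i Φ) (A (P j Φ)) with hqdef
  set a : ℕ → ℝ := fun i => (q i i).re with hadef
  set c : ℕ → ℝ := fun j => f (j / M) with hcdef
  set d : ℕ → ℝ := fun j => g (j / M) with hddef
  have ha0 : ∀ i, 0 ≤ a i := fun i => hApos _
  -- band vanishing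
  have hq0' : ∀ i j : ℕ, i ∉ Finset.Icc (j - σ) (j + σ) → q i j = 0 := by
    intro i j hi
    have hb : σ < ((i : ℤ) - (j : ℤ)).natAbs := by
      simp only [Finset.mem_Icc, not_and_or, not_le] at hi
      omega
    have h0 : P i (A (P j Φ)) = 0 := by
      have := hband i j hb
      calc P i (A (P j Φ)) = ((P i).comp (A.comp (P j))) Φ := rfl
        _ = 0 := by rw [this]; rfl
    have hsymP := (hPsa i).isSymmetric
    have : (inner ℂ (P i Φ) (A (P j Φ)) : ℂ) = inner ℂ Φ (P i (A (P j Φ))) := by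
      have := hsymP Φ (A (P j Φ))
      simpa using this
    rw [hqdef]
    simp only []
    rw [this, h0, inner_zero_right]
  -- three HasSum claims
  have claim1 : HasSum (fun j => ∑ i ∈ Finset.Icc (j - σ) (j + σ), q i j)
      (inner ℂ Φ (A Φ)) := by
    have h1 : HasSum (fun j => (1:ℝ) • P j Φ) Φ := by simpa using hPcomplete Φ
    have := aux_claim P A σ Φ hq0' (fun _ => (1:ℝ)) Φ h1
    simpa using this
  have claim2 : HasSum (fun j => ∑ i ∈ Finset.Icc (j - σ) (j + σ),
      ((c i : ℂ) * (c j : ℂ)) * q i j) (inner ℂ (fM Φ) (A (fM Φ))) :=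
    aux_claim P A σ Φ hq0' c (fM Φ) (hfM Φ)
  have claim3 : HasSum (fun j => ∑ i ∈ Finset.Icc (j - σ) (j + σ),
      ((d i : ℂ) * (d j : ℂ)) * q i j) (inner ℂ (gM Φ) (A (gM Φ))) :=
    aux_claim P A σ Φ hq0' d (gM Φ) (hgM Φ)
  -- diagonal sum
  have diag : HasSum a ((inner ℂ Φ (A0 Φ) : ℂ).re) := by
    have h1 : HasSum (fun j => (inner ℂ Φ (P j (A (P j Φ))) : ℂ)) (inner ℂ Φ (A0 Φ)) :=
      (hA0 Φ).mapL (innerSL ℂ Φ)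
    have h2 : ∀ j : ℕ, (inner ℂ Φ (P j (A (P j Φ))) : ℂ) = q j j := by
      intro j
      have := ((hPsa j).isSymmetric Φ (A (P j Φ))).symm
      simpa using this
    have h3 : HasSum (fun j => q j j) (inner ℂ Φ (A0 Φ)) :=
      h1.congr_fun fun j => (h2 j).symm
    exact h3.mapL Complex.reCLM
  
  -- α and basic positivity
  set α : ℝ := (inner ℂ Φ (A0 Φ) : ℂ).re with halpha
  have halpha0 : 0 ≤ α := hasSum_le (fun i => ha0 i) hasSum_zero diag
  set C0 : ℝ := ((Lf : ℝ)^2 + (Lg : ℝ)^2) * ((σ : ℝ) / M)^2 with hC0def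
  have hC0 : 0 ≤ C0 := by positivity
  -- combined HasSum
  set S : ℕ → ℂ := fun j => ∑ i ∈ Finset.Icc (j - σ) (j + σ),
      ((1:ℂ) - (c i : ℂ) * (c j : ℂ) - (d i : ℂ) * (d j : ℂ)) * q i j with hSdef
  have hS : HasSum S ((inner ℂ Φ (A Φ) : ℂ) - inner ℂ (fM Φ) (A (fM Φ))
      - inner ℂ (gM Φ) (A (gM Φ))) := by
    have hcomb := (claim1.sub claim2).sub claim3
    refine hcomb.congr_fun fun j => ?_
    simp only [hSdef]
    rw [← Finset.sum_sub_distrib, ← Finset.sum_sub_distrib]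
    exact Finset.sum_congr rfl fun i _ => by ring
  have hSre : HasSum (fun j => (S j).re)
      (((inner ℂ Φ (A Φ) : ℂ) - inner ℂ (fM Φ) (A (fM Φ))
        - inner ℂ (gM Φ) (A (gM Φ))).re) := hS.mapL Complex.reCLM
  -- coefficient identities and bounds
  have hid : ∀ i j : ℕ, (1:ℝ) - c i * c j - d i * d j
      = ((c i - c j)^2 + (d i - d j)^2)/2 := by
    intro i j
    have h1 := hfg ((i:ℝ) / M); have h2 := hfg ((j:ℝ) / M)
    simp only [hcdef, hddef]
    linear_combination -(h1+h2)/2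
  have hclip : ∀ i j : ℕ, |c i - c j| ≤ (Lf:ℝ) * (|(i:ℝ) - (j:ℝ)| / M) := by
    intro i j
    have := hLf.dist_le_mul ((i:ℝ)/M) ((j:ℝ)/M)
    rw [Real.dist_eq, Real.dist_eq] at this
    calc |c i - c j| ≤ (Lf:ℝ) * |(i:ℝ)/M - (j:ℝ)/M| := this
      _ = (Lf:ℝ) * (|(i:ℝ) - (j:ℝ)| / M) := by
          rw [div_sub_div_same, abs_div, abs_of_pos hM]
  have hdlip : ∀ i j : ℕ, |d i - d j| ≤ (Lg:ℝ) * (|(i:ℝ) - (j:ℝ)| / M) := by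
    intro i j
    have := hLg.dist_le_mul ((i:ℝ)/M) ((j:ℝ)/M)
    rw [Real.dist_eq, Real.dist_eq] at this
    calc |d i - d j| ≤ (Lg:ℝ) * |(i:ℝ)/M - (j:ℝ)/M| := this
      _ = (Lg:ℝ) * (|(i:ℝ) - (j:ℝ)| / M) := by
          rw [div_sub_div_same, abs_div, abs_of_pos hM]
  have hcoef : ∀ i j : ℕ, i ∈ Finset.Icc (j - σ) (j + σ) →
      |(1:ℝ) - c i * c j - d i * d j| ≤ C0 / 2 := by
    intro i j hi
    have hij : |(i:ℝ) - (j:ℝ)| ≤ (σ:ℝ) := by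
      simp only [Finset.mem_Icc] at hi
      have h1 : i ≤ j + σ := hi.2
      have h2 : j ≤ i + σ := by omega
      have h1' : (i:ℝ) ≤ (j:ℝ) + σ := by exact_mod_cast h1
      have h2' : (j:ℝ) ≤ (i:ℝ) + σ := by exact_mod_cast h2
      rw [abs_sub_le_iff]
      constructor <;> linarith
    have hc2 : (c i - c j)^2 ≤ (Lf:ℝ)^2 * ((σ:ℝ)/M)^2 := by
      have h1 : |c i - c j| ≤ (Lf:ℝ) * ((σ:ℝ)/M) := by
        refine (hclip i j).trans ?_
        gcongr
      calc (c i - c j)^2 = |c i - c j|^2 := (sq_abs _).symm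
        _ ≤ ((Lf:ℝ) * ((σ:ℝ)/M))^2 := by
            apply pow_le_pow_left₀ (abs_nonneg _) h1
        _ = (Lf:ℝ)^2 * ((σ:ℝ)/M)^2 := by ring
    have hd2 : (d i - d j)^2 ≤ (Lg:ℝ)^2 * ((σ:ℝ)/M)^2 := by
      have h1 : |d i - d j| ≤ (Lg:ℝ) * ((σ:ℝ)/M) := by
        refine (hdlip i j).trans ?_
        gcongr
      calc (d i - d j)^2 = |d i - d j|^2 := (sq_abs _).symm
        _ ≤ ((Lg:ℝ) * ((σ:ℝ)/M))^2 := by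
            apply pow_le_pow_left₀ (abs_nonneg _) h1
        _ = (Lg:ℝ)^2 * ((σ:ℝ)/M)^2 := by ring
    rw [hid i j, abs_of_nonneg (by positivity)]
    rw [hC0def]
    nlinarith [hc2, hd2]
  have hq_abs : ∀ i j : ℕ, ‖q i j‖ ≤ (a i + a j)/2 :=
    fun i j => aux_cs A hAsa hApos _ _
  
  -- bound functions
  set R : ℕ → ℝ := fun j => ∑ k ∈ Finset.Icc 1 σ,
      (a (j+k) + if k ≤ j then a (j-k) else 0) with hRdef
  set B : ℕ → ℝ := fun j => C0/4 * R j + C0/2 * (σ:ℝ) * a j with hBdef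
  -- pointwise bound |S j|.re ≤ B j
  have hpoint : ∀ j, |(S j).re| ≤ B j := by
    intro j
    have hjmem : j ∈ Finset.Icc (j - σ) (j + σ) := by
      simp only [Finset.mem_Icc]; omega
    have h1 : |(S j).re| ≤ ‖S j‖ := Complex.abs_re_le_norm _
    have h2 : ‖S j‖ ≤ ∑ i ∈ Finset.Icc (j - σ) (j + σ),
        |(1:ℝ) - c i * c j - d i * d j| * ‖q i j‖ := by
      refine (norm_sum_le _ _).trans_eq ?_
      refine Finset.sum_congr rfl fun i _ => ?_
      rw [norm_mul]
      congr 1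
      rw [show ((1:ℂ) - (c i : ℂ) * (c j : ℂ) - (d i : ℂ) * (d j : ℂ))
          = (((1:ℝ) - c i * c j - d i * d j : ℝ) : ℂ) by push_cast; ring]
      rw [Complex.norm_real, Real.norm_eq_abs]
    have hdiagzero : |(1:ℝ) - c j * c j - d j * d j| * ‖q j j‖ = 0 := by
      have hz : (1:ℝ) - c j * c j - d j * d j = 0 := by
        have := hfg ((j:ℝ)/M)
        simp only [hcdef, hddef]
        nlinarith [this]
      rw [hz, abs_zero, zero_mul]
    have h3 : ∑ i ∈ Finset.Icc (j - σ) (j + σ),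
        |(1:ℝ) - c i * c j - d i * d j| * ‖q i j‖
        = ∑ i ∈ (Finset.Icc (j - σ) (j + σ)).erase j,
          |(1:ℝ) - c i * c j - d i * d j| * ‖q i j‖ := by
      rw [← Finset.sum_erase_add _ _ hjmem, hdiagzero, add_zero]
    have h4 : ∑ i ∈ (Finset.Icc (j - σ) (j + σ)).erase j,
        |(1:ℝ) - c i * c j - d i * d j| * ‖q i j‖
        ≤ ∑ i ∈ (Finset.Icc (j - σ) (j + σ)).erase j, C0/4 * (a i + a j) := by
      refine Finset.sum_le_sum fun i hi => ?_
      have hi' : i ∈ Finset.Icc (j - σ) (j + σ) := Finset.mem_of_mem_erase hi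
      have hb1 := hcoef i j hi'
      have hb2 := hq_abs i j
      have hnn : (0:ℝ) ≤ ‖q i j‖ := norm_nonneg _
      calc |(1:ℝ) - c i * c j - d i * d j| * ‖q i j‖
          ≤ (C0/2) * ((a i + a j)/2) :=
            mul_le_mul hb1 hb2 hnn (by linarith [hC0])
        _ = C0/4 * (a i + a j) := by ring
    have hcard : (((Finset.Icc (j - σ) (j + σ)).erase j).card : ℝ) ≤ 2*(σ:ℝ) := by
      have he := Finset.card_erase_of_mem hjmem
      have hic := Nat.card_Icc (j - σ) (j + σ)
      have : ((Finset.Icc (j - σ) (j + σ)).erase j).card ≤ 2*σ := by omega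
      exact_mod_cast this
    have hsub : ∑ i ∈ (Finset.Icc (j-σ) (j+σ)).erase j, a i ≤ R j := by
      have hsplit : (Finset.Icc (j-σ) (j+σ)).erase j
          = Finset.Ico (j-σ) j ∪ Finset.Ioc j (j+σ) := by
        ext i
        simp only [Finset.mem_erase, Finset.mem_Icc, Finset.mem_union, Finset.mem_Ico,
          Finset.mem_Ioc]
        omega
      have hdisj : Disjoint (Finset.Ico (j-σ) j) (Finset.Ioc j (j+σ)) := by
        rw [Finset.disjoint_left]
        intro x hx hx'
        simp only [Finset.mem_Ico] at hx
        simp only [Finset.mem_Ioc] at hx'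
        omega
      rw [hsplit, Finset.sum_union hdisj, hRdef]
      simp only []
      rw [Finset.sum_add_distrib]
      have hA : ∑ i ∈ Finset.Ioc j (j+σ), a i = ∑ k ∈ Finset.Icc 1 σ, a (j+k) := by
        rw [show Finset.Ioc j (j+σ) = (Finset.Icc 1 σ).image (fun k => j + k) by
          ext i
          simp only [Finset.mem_Ioc, Finset.mem_image, Finset.mem_Icc]
          constructor
          · intro h; exact ⟨i - j, by omega, by omega⟩
          · rintro ⟨k, hk, rfl⟩; omega]
        rw [Finset.sum_image (fun x _ y _ h => by omega)]
      have hB2 : ∑ i ∈ Finset.Ico (j-σ) j, a i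
          ≤ ∑ k ∈ Finset.Icc 1 σ, (if k ≤ j then a (j-k) else 0) := by
        rw [← Finset.sum_filter]
        have himg : Finset.Ico (j-σ) j
            ⊆ ((Finset.Icc 1 σ).filter (· ≤ j)).image (fun k => j - k) := by
          intro i hi
          simp only [Finset.mem_Ico] at hi
          simp only [Finset.mem_image, Finset.mem_filter, Finset.mem_Icc]
          exact ⟨j - i, ⟨⟨by omega, by omega⟩, by omega⟩, by omega⟩
        have heq : ∑ i ∈ ((Finset.Icc 1 σ).filter (· ≤ j)).image (fun k => j - k), a i
            = ∑ k ∈ (Finset.Icc 1 σ).filter (· ≤ j), a (j - k) := by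
          refine Finset.sum_image fun x hx y hy h => ?_
          simp only [Finset.coe_filter, Finset.mem_coe, Finset.mem_filter, Finset.mem_Icc,
            Set.mem_setOf_eq] at hx hy
          omega
        calc ∑ i ∈ Finset.Ico (j-σ) j, a i
            ≤ ∑ i ∈ ((Finset.Icc 1 σ).filter (· ≤ j)).image (fun k => j - k), a i :=
              Finset.sum_le_sum_of_subset_of_nonneg himg (fun i _ _ => ha0 i)
          _ = ∑ k ∈ (Finset.Icc 1 σ).filter (· ≤ j), a (j - k) := heq
      linarith
    have h5 : ∑ i ∈ (Finset.Icc (j-σ) (j+σ)).erase j, (C0/4 * (a i + a j)) ≤ B j := by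
      have hsum : ∑ i ∈ (Finset.Icc (j-σ) (j+σ)).erase j, (C0/4 * (a i + a j))
          = C0/4 * ((∑ i ∈ (Finset.Icc (j-σ) (j+σ)).erase j, a i)
            + (((Finset.Icc (j-σ) (j+σ)).erase j).card : ℝ) * a j) := by
        rw [← Finset.mul_sum, Finset.sum_add_distrib, Finset.sum_const, nsmul_eq_mul]
      rw [hsum, hBdef]
      have ht1 : C0/4 * (∑ i ∈ (Finset.Icc (j-σ) (j+σ)).erase j, a i) ≤ C0/4 * R j :=
        mul_le_mul_of_nonneg_left hsub (by linarith)
      have ht2 : C0/4 * ((((Finset.Icc (j-σ) (j+σ)).erase j).card : ℝ) * a j)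
          ≤ C0/4 * (2*(σ:ℝ) * a j) :=
        mul_le_mul_of_nonneg_left (mul_le_mul_of_nonneg_right hcard (ha0 j)) (by linarith)
      have hr : C0/4 * (2*(σ:ℝ) * a j) = C0/2 * (σ:ℝ) * a j := by ring
      simp only []
      nlinarith [ht1, ht2]
    exact ((h1.trans h2).trans_eq h3).trans (h4.trans h5)
  -- summing up the bounds
  have hTk : ∀ k : ℕ, HasSum (fun j => a (j+k) + if k ≤ j then a (j-k) else 0)
      ((α - ∑ i ∈ Finset.range k, a i) + α) := by
    intro k
    have h1 : HasSum (fun j => a (j+k)) (α - ∑ i ∈ Finset.range k, a i) := by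
      have hx : α - ∑ i ∈ Finset.range k, a i + ∑ i ∈ Finset.range k, a i = α := by ring
      exact (hasSum_nat_add_iff k).2 (by rw [hx]; exact diag)
    have h2 : HasSum (fun j => if k ≤ j then a (j-k) else 0) α := by
      have hinj : Function.Injective (fun n : ℕ => n + k) := fun x y h => by dsimp only at h; omega
      have hzero : ∀ j ∉ Set.range (fun n : ℕ => n + k),
          (if k ≤ j then a (j-k) else 0) = 0 := by
        intro j hj
        rw [if_neg]
        intro hkj
        exact hj ⟨j - k, by dsimp only; omega⟩
      refine (hinj.hasSum_iff hzero).1 ?_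
      refine diag.congr_fun fun n => ?_
      simp only [Function.comp]
      rw [if_pos (by omega : k ≤ n + k)]
      congr 1
      omega
    exact h1.add h2
  have hRsum : HasSum R (∑ k ∈ Finset.Icc 1 σ, ((α - ∑ i ∈ Finset.range k, a i) + α)) := by
    rw [hRdef]; exact hasSum_sum fun k _ => hTk k
  have hBsum : HasSum B (C0/4 * (∑ k ∈ Finset.Icc 1 σ, ((α - ∑ i ∈ Finset.range k, a i) + α))
      + C0/2 * (σ:ℝ) * α) := by
    rw [hBdef]
    exact (hRsum.mul_left _).add (diag.mul_left _)
  -- numeric bound on the total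
  have hTle : C0/4 * (∑ k ∈ Finset.Icc 1 σ, ((α - ∑ i ∈ Finset.range k, a i) + α))
      + C0/2 * (σ:ℝ) * α
      ≤ 2 * σ * ((Lf : ℝ)^2 + (Lg : ℝ)^2) * ((σ : ℝ) / M)^2 * α := by
    have hsum_le : ∑ k ∈ Finset.Icc 1 σ, ((α - ∑ i ∈ Finset.range k, a i) + α)
        ≤ (σ:ℝ) * (2*α) := by
      have hterm : ∀ k ∈ Finset.Icc 1 σ, (α - ∑ i ∈ Finset.range k, a i) + α ≤ 2*α := by
        intro k _
        have h0 : 0 ≤ ∑ i ∈ Finset.range k, a i := Finset.sum_nonneg fun i _ => ha0 i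
        linarith
      calc ∑ k ∈ Finset.Icc 1 σ, ((α - ∑ i ∈ Finset.range k, a i) + α)
          ≤ (Finset.Icc 1 σ).card • (2*α) := Finset.sum_le_card_nsmul _ _ _ hterm
        _ = (σ:ℝ) * (2*α) := by
            rw [Nat.card_Icc, nsmul_eq_mul]
            norm_num
    have hRHS : 2 * σ * ((Lf : ℝ)^2 + (Lg : ℝ)^2) * ((σ : ℝ) / M)^2 * α
        = 2*(σ:ℝ)*C0*α := by rw [hC0def]; ring
    rw [hRHS]
    have ht1 : C0/4 * (∑ k ∈ Finset.Icc 1 σ, ((α - ∑ i ∈ Finset.range k, a i) + α))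
        ≤ C0/4 * ((σ:ℝ) * (2*α)) := mul_le_mul_of_nonneg_left hsum_le (by linarith)
    have hnn : 0 ≤ C0 * (σ:ℝ) * α :=
      mul_nonneg (mul_nonneg hC0 (Nat.cast_nonneg σ)) halpha0
    nlinarith [ht1, hnn]
  -- final assembly
  have hup : ∀ j, (S j).re ≤ B j := fun j => (le_abs_self _).trans (hpoint j)
  have hlo : ∀ j, -B j ≤ (S j).re := fun j => by
    have h1 := hpoint j
    have h2 := neg_abs_le ((S j).re)
    linarith
  have hE1 := hasSum_le hup hSre hBsum
  have hE2 := hasSum_le hlo hBsum.neg hSre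
  have hgoal : |((inner ℂ Φ (A Φ) : ℂ) - inner ℂ (fM Φ) (A (fM Φ))
      - inner ℂ (gM Φ) (A (gM Φ))).re|
      ≤ 2 * σ * ((Lf : ℝ)^2 + (Lg : ℝ)^2) * ((σ : ℝ) / M)^2 * α := by
    rw [abs_le]
    constructor
    · linarith
    · linarith
  rw [halpha] at hgoal
  simpa [Complex.sub_re] using hgoal
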